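/- With K(x,y) = 1 - tx - txy^2/((x-y)(y-1)), and I_0(x) = 1/(1-tx) - 1/(tx^2) + (1+t)/(tx) + x(1-t) - tx^2, J_0(y) = -t/(y-1)^2 + (1-t)/(y-1) - 1/(ty^2) + (1+t)/(ty) + y, one has the identity (I_0(x) - J_0(y))/K(x,y) = (x-y)(1-y+txy)(x+y-xy-xyt(1+x-xy)) / (x^2 y^2 t (xt-1)(y-1)) as rational functions. -/

import Mathlib

/-- The field `ℚ(t, x, y)` of rational functions in three variables. -/
noncomputable abbrev RF : Type := RatFunc (RatFunc (RatFunc ℚ))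

/-- The variable `t`. -/
noncomputable def tF : RF := RatFunc.C (RatFunc.C RatFunc.X)
/-- The variable `x`. -/
noncomputable def xF : RF := RatFunc.C RatFunc.X
/-- The variable `y`. -/
noncomputable def yF : RF := RatFunc.X

/-- The kernel `K(x,y)`. -/
noncomputable def KerXY : RF :=
  1 - tF * xF - tF * xF * yF ^ 2 / ((xF - yF) * (yF - 1))

/-- The rational invariant `I₀(x)`. -/
noncomputable def I0 : RF :=
  1 / (1 - tF * xF) - 1 / (tF * xF ^ 2) + (1 + tF) / (tF * xF) +
    xF * (1 - tF) - tF * xF ^ 2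

/-- The rational invariant `J₀(y)`. -/
noncomputable def J0 : RF :=
  -tF / (yF - 1) ^ 2 + (1 - tF) / (yF - 1) - 1 / (tF * yF ^ 2) +
    (1 + tF) / (tF * yF) + yF

noncomputable def t1 : RatFunc ℚ := RatFunc.X
noncomputable def t2 : RatFunc (RatFunc ℚ) := RatFunc.C t1
noncomputable def x2 : RatFunc (RatFunc ℚ) := RatFunc.X

lemma aux_ne {K : Type*} [Field K] (p : Polynomial K) (a : K) (h : p.eval a ≠ 0) :
    algebraMap (Polynomial K) (RatFunc K) p ≠ 0 :=
  RatFunc.algebraMap_ne_zero (fun hp => h (by simp [hp]))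

lemma Cne {K : Type*} [Field K] {a : K} (h : a ≠ 0) : (RatFunc.C a : RatFunc K) ≠ 0 :=
  (map_ne_zero_iff _ (RatFunc.C).injective).mpr h

lemma t2_ne : t2 ≠ 0 := Cne (show t1 ≠ 0 from RatFunc.X_ne_zero)
lemma x2_ne : x2 ≠ 0 := RatFunc.X_ne_zero

lemma htx2 : 1 - t2 * x2 ≠ 0 := by
  unfold t2 x2
  have : (1 - RatFunc.C t1 * RatFunc.X : RatFunc (RatFunc ℚ)) =
      algebraMap (Polynomial (RatFunc ℚ)) _ (1 - Polynomial.C t1 * Polynomial.X) := by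
    simp [RatFunc.algebraMap_C, RatFunc.algebraMap_X]
  rw [this]
  exact aux_ne _ 0 (by simp)

lemma ht : tF ≠ 0 := Cne t2_ne
lemma hx : xF ≠ 0 := Cne x2_ne
lemma hy : yF ≠ 0 := RatFunc.X_ne_zero
lemma htx : 1 - tF * xF ≠ 0 := by
  show 1 - RatFunc.C t2 * RatFunc.C x2 ≠ 0
  rw [← map_one (RatFunc.C (K := RatFunc (RatFunc ℚ))), ← map_mul, ← map_sub]
  exact Cne htx2
lemma hy1 : yF - 1 ≠ 0 := by
  show (RatFunc.X : RF) - 1 ≠ 0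
  have : (RatFunc.X - 1 : RF) =
      algebraMap (Polynomial (RatFunc (RatFunc ℚ))) _ (Polynomial.X - 1) := by
    simp [RatFunc.algebraMap_X]
  rw [this]; exact aux_ne _ 0 (by simp)
lemma hxy : xF - yF ≠ 0 := by
  show RatFunc.C x2 - RatFunc.X ≠ 0
  have : (RatFunc.C x2 - RatFunc.X : RF) =
      algebraMap (Polynomial (RatFunc (RatFunc ℚ))) _ (Polynomial.C x2 - Polynomial.X) := by
    simp [RatFunc.algebraMap_X, RatFunc.algebraMap_C]
  rw [this]; exact aux_ne _ 0 (by simpa using x2_ne)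

lemma hN : (1 - tF * xF) * (xF - yF) * (yF - 1) - tF * xF * yF ^ 2 ≠ 0 := by
  show (1 - RatFunc.C t2 * RatFunc.C x2) * (RatFunc.C x2 - RatFunc.X) * (RatFunc.X - 1)
      - RatFunc.C t2 * RatFunc.C x2 * RatFunc.X ^ 2 ≠ 0
  have : ((1 - RatFunc.C t2 * RatFunc.C x2) * (RatFunc.C x2 - RatFunc.X) * (RatFunc.X - 1)
      - RatFunc.C t2 * RatFunc.C x2 * RatFunc.X ^ 2 : RF) =
      algebraMap (Polynomial (RatFunc (RatFunc ℚ))) _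
      ((1 - Polynomial.C t2 * Polynomial.C x2) * (Polynomial.C x2 - Polynomial.X) *
        (Polynomial.X - 1) - Polynomial.C t2 * Polynomial.C x2 * Polynomial.X ^ 2) := by
    simp [RatFunc.algebraMap_X, RatFunc.algebraMap_C]
  rw [this]
  refine aux_ne _ 0 ?_
  have h0 : ((1 - Polynomial.C t2 * Polynomial.C x2) * (Polynomial.C x2 - Polynomial.X) *
        (Polynomial.X - 1) - Polynomial.C t2 * Polynomial.C x2 * Polynomial.X ^ 2).eval 0
      = -((1 - t2 * x2) * x2) := by simp
  rw [h0]
  exact neg_ne_zero.mpr (mul_ne_zero htx2 x2_ne)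

set_option maxHeartbeats 2000000 in
lemma key {K : Type*} [Field K] (t x y : K) (ht : t ≠ 0) (hx : x ≠ 0) (hy : y ≠ 0)
    (htx : 1 - t * x ≠ 0) (hy1 : y - 1 ≠ 0) (hxy : x - y ≠ 0)
    (hN : (1 - t * x) * (x - y) * (y - 1) - t * x * y ^ 2 ≠ 0) :
    ((1 / (1 - t * x) - 1 / (t * x ^ 2) + (1 + t) / (t * x) + x * (1 - t) - t * x ^ 2) -
      (-t / (y - 1) ^ 2 + (1 - t) / (y - 1) - 1 / (t * y ^ 2) + (1 + t) / (t * y) + y)) /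
      (1 - t * x - t * x * y ^ 2 / ((x - y) * (y - 1))) =
      (x - y) * (1 - y + t * x * y) * (x + y - x * y - x * y * t * (1 + x - x * y)) /
        (x ^ 2 * y ^ 2 * t * (x * t - 1) * (y - 1)) := by
  have hxt1 : x * t - 1 ≠ 0 := by
    have h : x * t - 1 = -(1 - t * x) := by ring
    rw [h]; exact neg_ne_zero.mpr htx
  have hD : (1 - t * x) * (t * x ^ 2) * (y - 1) ^ 2 * (t * y ^ 2) ≠ 0 :=
    mul_ne_zero (mul_ne_zero (mul_ne_zero htx (mul_ne_zero ht (pow_ne_zero 2 hx)))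
      (pow_ne_zero 2 hy1)) (mul_ne_zero ht (pow_ne_zero 2 hy))
  have hB : x ^ 2 * y ^ 2 * t * (x * t - 1) * (y - 1) ≠ 0 :=
    mul_ne_zero (mul_ne_zero (mul_ne_zero (mul_ne_zero (pow_ne_zero 2 hx)
      (pow_ne_zero 2 hy)) ht) hxt1) hy1
  have hDk : (x - y) * (y - 1) ≠ 0 := mul_ne_zero hxy hy1
  have hKer : 1 - t * x - t * x * y ^ 2 / ((x - y) * (y - 1)) =
      ((1 - t * x) * (x - y) * (y - 1) - t * x * y ^ 2) / ((x - y) * (y - 1)) := by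
    rw [eq_div_iff hDk, sub_mul, sub_mul, div_mul_cancel₀ _ hDk]; ring
  have e1 : 1 / (1 - t * x) = ((t * x ^ 2) * (y - 1) ^ 2 * (t * y ^ 2)) /
      ((1 - t * x) * (t * x ^ 2) * (y - 1) ^ 2 * (t * y ^ 2)) := by
    rw [div_eq_div_iff htx hD]; ring
  have e2 : 1 / (t * x ^ 2) = ((1 - t * x) * (y - 1) ^ 2 * (t * y ^ 2)) /
      ((1 - t * x) * (t * x ^ 2) * (y - 1) ^ 2 * (t * y ^ 2)) := by
    rw [div_eq_div_iff (mul_ne_zero ht (pow_ne_zero 2 hx)) hD]; ring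
  have e3 : (1 + t) / (t * x) = ((1 + t) * x * (1 - t * x) * (y - 1) ^ 2 * (t * y ^ 2)) /
      ((1 - t * x) * (t * x ^ 2) * (y - 1) ^ 2 * (t * y ^ 2)) := by
    rw [div_eq_div_iff (mul_ne_zero ht hx) hD]; ring
  have e6 : -t / (y - 1) ^ 2 = (-t * ((1 - t * x) * (t * x ^ 2) * (t * y ^ 2))) /
      ((1 - t * x) * (t * x ^ 2) * (y - 1) ^ 2 * (t * y ^ 2)) := by
    rw [div_eq_div_iff (pow_ne_zero 2 hy1) hD]; ring
  have e7 : (1 - t) / (y - 1) = ((1 - t) * ((1 - t * x) * (t * x ^ 2) * (y - 1) * (t * y ^ 2))) /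
      ((1 - t * x) * (t * x ^ 2) * (y - 1) ^ 2 * (t * y ^ 2)) := by
    rw [div_eq_div_iff hy1 hD]; ring
  have e8 : 1 / (t * y ^ 2) = ((1 - t * x) * (t * x ^ 2) * (y - 1) ^ 2) /
      ((1 - t * x) * (t * x ^ 2) * (y - 1) ^ 2 * (t * y ^ 2)) := by
    rw [div_eq_div_iff (mul_ne_zero ht (pow_ne_zero 2 hy)) hD]; ring
  have e9 : (1 + t) / (t * y) = ((1 + t) * y * ((1 - t * x) * (t * x ^ 2) * (y - 1) ^ 2)) /
      ((1 - t * x) * (t * x ^ 2) * (y - 1) ^ 2 * (t * y ^ 2)) := by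
    rw [div_eq_div_iff (mul_ne_zero ht hy) hD]; ring
  have ec : x * (1 - t) - t * x ^ 2 - y =
      ((x * (1 - t) - t * x ^ 2 - y) * ((1 - t * x) * (t * x ^ 2) * (y - 1) ^ 2 * (t * y ^ 2))) /
      ((1 - t * x) * (t * x ^ 2) * (y - 1) ^ 2 * (t * y ^ 2)) :=
    (mul_div_cancel_right₀ _ hD).symm
  have hI : (1 / (1 - t * x) - 1 / (t * x ^ 2) + (1 + t) / (t * x) + x * (1 - t) - t * x ^ 2) -
      (-t / (y - 1) ^ 2 + (1 - t) / (y - 1) - 1 / (t * y ^ 2) + (1 + t) / (t * y) + y) =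
      (-t * y ^ 2 + 2 * t * y ^ 3 - t * y ^ 4 + t * x * y ^ 2 - 2 * t * x * y ^ 3 + t * x * y ^ 4 + t * x ^ 2 - 3 * t * x ^ 2 * y + 3 * t * x ^ 2 * y ^ 2 - t * x ^ 2 * y ^ 3 + 2 * t ^ 2 * x * y ^ 2 - 4 * t ^ 2 * x * y ^ 3 + 2 * t ^ 2 * x * y ^ 4 - t ^ 2 * x ^ 2 * y + 3 * t ^ 2 * x ^ 2 * y ^ 2 - 3 * t ^ 2 * x ^ 2 * y ^ 3 + 2 * t ^ 2 * x ^ 2 * y ^ 4 - t ^ 2 * x ^ 2 * y ^ 5 - t ^ 2 * x ^ 3 + 3 * t ^ 2 * x ^ 3 * y - 2 * t ^ 2 * x ^ 3 * y ^ 2 - t ^ 2 * x ^ 3 * y ^ 3 + t ^ 2 * x ^ 3 * y ^ 4 - t ^ 3 * x ^ 2 * y ^ 2 + 3 * t ^ 3 * x ^ 2 * y ^ 3 - t ^ 3 * x ^ 2 * y ^ 4 + t ^ 3 * x ^ 3 * y - 4 * t ^ 3 * x ^ 3 * y ^ 2 + 5 * t ^ 3 * x ^ 3 * y ^ 3 -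 3 * t ^ 3 * x ^ 3 * y ^ 4 + t ^ 3 * x ^ 3 * y ^ 5 - 2 * t ^ 3 * x ^ 4 * y ^ 2 + 4 * t ^ 3 * x ^ 4 * y ^ 3 - 2 * t ^ 3 * x ^ 4 * y ^ 4 - t ^ 4 * x ^ 3 * y ^ 3 + t ^ 4 * x ^ 4 * y ^ 2 - 2 * t ^ 4 * x ^ 4 * y ^ 3 + t ^ 4 * x ^ 4 * y ^ 4 + t ^ 4 * x ^ 5 * y ^ 2 - 2 * t ^ 4 * x ^ 5 * y ^ 3 + t ^ 4 * x ^ 5 * y ^ 4) / ((1 - t * x) * (t * x ^ 2) * (y - 1) ^ 2 * (t * y ^ 2)) := by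
    have hsplit : (1 / (1 - t * x) - 1 / (t * x ^ 2) + (1 + t) / (t * x) + x * (1 - t) - t * x ^ 2) -
        (-t / (y - 1) ^ 2 + (1 - t) / (y - 1) - 1 / (t * y ^ 2) + (1 + t) / (t * y) + y) =
        ((1 / (1 - t * x) - 1 / (t * x ^ 2) + (1 + t) / (t * x)) -
          (-t / (y - 1) ^ 2 + (1 - t) / (y - 1) - 1 / (t * y ^ 2) + (1 + t) / (t * y))) +
        (x * (1 - t) - t * x ^ 2 - y) := by ring
    rw [hsplit, e1, e2, e3, e6, e7, e8, e9, ec]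
    simp only [← add_div, div_sub_div_same]
    rw [div_eq_div_iff hD hD]
    ring
  rw [hI, hKer, div_div_eq_mul_div, div_mul_eq_mul_div, div_div,
    div_eq_div_iff (mul_ne_zero hD hN) hB]
  ring

/-- The identity `(I₀(x) - J₀(y))/K(x,y) = (x-y)(1-y+txy)(x+y-xy-xyt(1+x-xy)) /
(x²y²t(xt-1)(y-1))` in `ℚ(t,x,y)`. -/
theorem stmt16 :
    (I0 - J0) / KerXY =
      (xF - yF) * (1 - yF + tF * xF * yF) *
          (xF + yF - xF * yF - xF * yF * tF * (1 + xF - xF * yF)) /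
        (xF ^ 2 * yF ^ 2 * tF * (xF * tF - 1) * (yF - 1)) := by
  unfold I0 J0 KerXY
  exact key tF xF yF ht hx hy htx hy1 hxy hN
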